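/- Assume σ ≠ 0. For every integer 0 ≤ l ≤ m, the conditional expectation of the number of old blocks re-observed with frequency l, given complete information, satisfies E[R_l | π] = binom(m,l)·Σ_{i=1}^{n} m_i·(i−σ)_{l↑}·Σ_{k=0}^{m} (V_{n+m,j+k}/V_{n,j})·C(m−l, k; σ, −n + i + (j−1)σ)/σ^k. -/

import Mathlib

open Finset

attribute [local instance] Classical.propDecidable

noncomputable section

/-- Rising factorial `x(x+1)⋯(x+N−1)`. -/
def risingFac (x : ℝ) (N : ℕ) : ℝ := ∏ i ∈ Finset.range N, (x + i)

/-- Falling factorial `x(x−1)⋯(x−N+1)`. -/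
def fallingFac (x : ℝ) (N : ℕ) : ℝ := ∏ i ∈ Finset.range N, (x - i)

/-- Noncentral generalized factorial coefficient `C(N,k;σ,γ)`. -/
def gfc (N k : ℕ) (σ γ : ℝ) : ℝ :=
  (1 / (Nat.factorial k : ℝ)) *
    ∑ i ∈ Finset.range (k + 1),
      (-1 : ℝ) ^ i * (Nat.choose k i : ℝ) * risingFac (-(i : ℝ) * σ - γ) N

/-- Central generalized factorial coefficient `C(N,k;σ)`. -/
def cgfc (N k : ℕ) (σ : ℝ) : ℝ := gfc N k σ 0

/-- Binomial coefficient over `ℤ`, zero unless `0 ≤ b ≤ a`. -/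
def ibinom (a b : ℤ) : ℝ :=
  if 0 ≤ b ∧ b ≤ a then (Nat.choose a.toNat b.toNat : ℝ) else 0

/-- Multinomial coefficient `m!/((l!)^r (m−rl)!)`, zero if `rl > m`. -/
def multinom (m l r : ℕ) : ℝ :=
  if r * l ≤ m then
    (Nat.factorial m : ℝ) / ((Nat.factorial l : ℝ) ^ r * (Nat.factorial (m - r * l) : ℝ))
  else 0

/-- `P` is a set partition of the finset `s`. -/
def IsPartOn {α : Type*} (s : Finset α) (P : Finset (Finset α)) : Prop :=
  (∀ B ∈ P, B ⊆ s) ∧ ∅ ∉ P ∧ ∀ a ∈ s, ∃! B, B ∈ P ∧ a ∈ B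

/-- Restriction of a partition to `s`. -/
def restrictPart {α : Type*} [DecidableEq α] (P : Finset (Finset α)) (s : Finset α) :
    Finset (Finset α) := (P.image fun C => C ∩ s).erase ∅

/-- Gibbs probability of a partition with block sizes `|C|` and `VN k` the Gibbs weight. -/
def gibbsW {α : Type*} (σ : ℝ) (VN : ℕ → ℝ) (P : Finset (Finset α)) : ℝ :=
  VN P.card * ∏ C ∈ P, risingFac (1 - σ) (C.card - 1)

/-- Ewens–Pitman weight system. -/
def EPV (σ θ : ℝ) : ℕ → ℕ → ℝ :=
  fun N k => (∏ i ∈ Finset.range k, (θ + (i : ℝ) * σ)) / risingFac θ N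

/-- The "old" elements `{1,…,n}` inside `{1,…,n+m}`. -/
def oldSet (n m : ℕ) : Finset (Fin (n + m)) :=
  Finset.univ.filter fun x => (x : ℕ) < n

/-- Number of new elements in the block of `ρ` containing the old block `Bi`. -/
def Scount (n m : ℕ) (Bi : Finset (Fin (n + m))) (ρ : Finset (Finset (Fin (n + m)))) : ℕ :=
  ∑ C ∈ ρ.filter (fun C => Bi ⊆ C), (C \ oldSet n m).card

/-- Partitions of `{1,…,n+m}` extending the partition `πP` of the old elements. -/
def extensions (n m : ℕ) (πP : Finset (Finset (Fin (n + m)))) :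
    Finset (Finset (Finset (Fin (n + m)))) :=
  Finset.univ.filter fun ρ => IsPartOn Finset.univ ρ ∧ restrictPart ρ (oldSet n m) = πP

/-- Conditional expectation given complete information (the initial partition `πP`). -/
def condExpPi (σ : ℝ) (V : ℕ → ℕ → ℝ) (n m : ℕ) (πP : Finset (Finset (Fin (n + m))))
    (f : Finset (Finset (Fin (n + m))) → ℝ) : ℝ :=
  (∑ ρ ∈ extensions n m πP, f ρ * gibbsW σ (V (n + m)) ρ) /
    (∑ ρ ∈ extensions n m πP, gibbsW σ (V (n + m)) ρ)

/-- Partitions of `{1,…,n+m}` whose restriction to the old elements has exactly `j` blocks. -/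
def withJ (n m j : ℕ) : Finset (Finset (Finset (Fin (n + m)))) :=
  Finset.univ.filter fun ρ =>
    IsPartOn Finset.univ ρ ∧ (restrictPart ρ (oldSet n m)).card = j

/-- Partitions of `s` with exactly `j` blocks. -/
def partsJOf {α : Type*} [Fintype α] (s : Finset α) (j : ℕ) :
    Finset (Finset (Finset α)) :=
  Finset.univ.filter fun π' => IsPartOn s π' ∧ π'.card = j

/-- Conditional expectation given the incomplete information `K_n = j`. -/
def condExpK (σ : ℝ) (V : ℕ → ℕ → ℝ) (n m j : ℕ)
    (f : Finset (Finset (Fin (n + m))) → ℝ) : ℝ :=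
  (∑ ρ ∈ withJ n m j, f ρ * gibbsW σ (V (n + m)) ρ) /
    (∑ π' ∈ partsJOf (oldSet n m) j, gibbsW σ (V n) π')

/-- Number of old blocks (indexed by `B`) re-observed in the additional sample. -/
def RcntB (n m j : ℕ) (B : Fin j → Finset (Fin (n + m)))
    (ρ : Finset (Finset (Fin (n + m)))) : ℕ :=
  (Finset.univ.filter fun i : Fin j => Scount n m (B i) ρ ≠ 0).card

/-- Number of old blocks (indexed by `B`) re-observed with frequency `l`. -/
def RlcntB (n m j l : ℕ) (B : Fin j → Finset (Fin (n + m)))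
    (ρ : Finset (Finset (Fin (n + m)))) : ℕ :=
  (Finset.univ.filter fun i : Fin j => Scount n m (B i) ρ = l).card

/-- Number of blocks of the restriction whose containing block has a new element. -/
def Rcnt (n m : ℕ) (ρ : Finset (Finset (Fin (n + m)))) : ℕ :=
  ((restrictPart ρ (oldSet n m)).filter fun Bi =>
    ∃ C ∈ ρ, Bi ⊆ C ∧ (C \ oldSet n m) ≠ ∅).card

/-- Number of blocks of the restriction whose containing block has exactly `l` new elements. -/
def Rlcnt (n m l : ℕ) (ρ : Finset (Finset (Fin (n + m)))) : ℕ :=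
  ((restrictPart ρ (oldSet n m)).filter fun Bi =>
    ∃ C ∈ ρ, Bi ⊆ C ∧ (C \ oldSet n m).card = l).card

/-- Number of bijections from `Fin j` onto the blocks of `π'` satisfying `Q`. -/
def bijCount {α : Type*} [Fintype α] (j : ℕ) (π' : Finset (Finset α))
    (Q : (Fin j → Finset α) → Prop) : ℕ :=
  ((Finset.univ : Finset (Fin j → Finset α)).filter fun β =>
    Function.Injective β ∧ Finset.image β Finset.univ = π' ∧ Q β).card

/-- Conditional expectation given almost-complete information. -/
def condExpTau (σ : ℝ) (V : ℕ → ℕ → ℝ) (n m j p : ℕ) (τ : Fin p → Fin j) (nτ : Fin p → ℕ)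
    (f : Finset (Finset (Fin (n + m))) → ℝ) : ℝ :=
  (∑ ρ ∈ withJ n m j,
      (bijCount j (restrictPart ρ (oldSet n m)) (fun β => ∀ i, (β (τ i)).card = nτ i) : ℝ) *
        f ρ * gibbsW σ (V (n + m)) ρ) /
    (∑ π' ∈ partsJOf (oldSet n m) j,
      (bijCount j π' (fun β => ∀ i, (β (τ i)).card = nτ i) : ℝ) * gibbsW σ (V n) π')


section Arith

lemma risingFac_zero (x : ℝ) : risingFac x 0 = 1 := by simp [risingFac]

lemma risingFac_succ (x : ℝ) (N : ℕ) : risingFac x (N+1) = risingFac x N * (x + N) :=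
  Finset.prod_range_succ _ _

lemma risingFac_add (x : ℝ) (a b : ℕ) :
    risingFac x (a+b) = risingFac x a * risingFac (x + a) b := by
  rw [risingFac, risingFac, risingFac, Finset.prod_range_add]
  congr 1
  refine Finset.prod_congr rfl fun i _ => ?_
  push_cast; ring

lemma risingFac_pos {σ : ℝ} (h : σ < 1) (N : ℕ) : 0 < risingFac (1-σ) N := by
  refine Finset.prod_pos fun i _ => ?_
  have : (0:ℝ) ≤ i := Nat.cast_nonneg i
  linarith

lemma gfc_zero_zero (σ γ : ℝ) : gfc 0 0 σ γ = 1 := by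
  simp [gfc, risingFac]

lemma gfc_zero_succ (σ γ : ℝ) (k : ℕ) : gfc 0 (k+1) σ γ = 0 := by
  rw [gfc]
  have h2 : ((∑ i ∈ Finset.range (k + 1 + 1), (-1:ℤ) ^ i * ↑((k+1).choose i) : ℤ) : ℝ)
      = ∑ i ∈ Finset.range (k+1+1), (-1:ℝ)^i * ((k+1).choose i) * risingFac (-(i:ℝ)*σ - γ) 0 := by
    push_cast; simp [risingFac]
  rw [← h2, Int.alternating_sum_range_choose]
  simp

lemma gfc_rec_zero (σ γ : ℝ) (N : ℕ) : gfc (N+1) 0 σ γ = ((N:ℝ) - γ) * gfc N 0 σ γ := by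
  simp only [gfc, Nat.factorial_zero, Nat.cast_one, zero_add, Finset.sum_range_one, pow_zero,
    Nat.choose_self, Nat.cast_zero, neg_zero, zero_mul, zero_sub, one_mul, Nat.cast_ofNat]
  rw [risingFac_succ]
  ring

lemma gfc_rec (σ γ : ℝ) (N k : ℕ) :
    gfc (N+1) (k+1) σ γ
      = σ * gfc N k σ γ + ((N:ℝ) - (k+1)*σ - γ) * gfc N (k+1) σ γ := by
  have hkey : ∀ i ∈ Finset.range (k+2),
      (((k+1).choose i : ℝ)) * (((k:ℝ)+1) - i) = ((k:ℝ)+1) * (k.choose i : ℝ) := by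
    intro i hi
    have hi' : i ≤ k + 1 := by
      have := Finset.mem_range.mp hi; omega
    have hnat : (k+1).choose i * ((k+1) - i) = (k+1) * k.choose i := by
      have e2 : (k+1) * k.choose i = (k+1).choose (i+1) * (i+1) := by
        simpa [Nat.succ_eq_add_one] using Nat.add_one_mul_choose_eq k i
      have e1 : (k+1).choose i * ((k+1) - i) = (k+1).choose (i+1) * (i+1) := by
        simpa using (Nat.choose_succ_right_eq (k+1) i).symm
      exact e1.trans e2.symm
    have : (((k+1).choose i * ((k+1) - i) : ℕ) : ℝ) = (((k+1) * k.choose i : ℕ) : ℝ) := by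
      exact_mod_cast congrArg (Nat.cast (R := ℝ)) hnat
    push_cast [Nat.cast_sub hi'] at this
    linarith [this]
  have hsplit : ∀ i ∈ Finset.range (k+2),
      (-1:ℝ)^i * ((k+1).choose i) * risingFac (-(i:ℝ)*σ - γ) (N+1)
      = ((N:ℝ) - (k+1)*σ - γ) * ((-1:ℝ)^i * ((k+1).choose i) * risingFac (-(i:ℝ)*σ - γ) N)
        + σ * (((k:ℝ)+1) * ((-1:ℝ)^i * (k.choose i) * risingFac (-(i:ℝ)*σ - γ) N)) := by
    intro i hi
    rw [risingFac_succ]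
    have h := hkey i hi
    linear_combination (σ * (-1:ℝ)^i * risingFac (-(i:ℝ)*σ - γ) N) * h
  rw [gfc, Finset.sum_congr rfl hsplit, Finset.sum_add_distrib, ← Finset.mul_sum, ← Finset.mul_sum]
  have hlast : ∑ i ∈ Finset.range (k+2), (-1:ℝ)^i * (k.choose i) * risingFac (-(i:ℝ)*σ - γ) N
      = ∑ i ∈ Finset.range (k+1), (-1:ℝ)^i * (k.choose i) * risingFac (-(i:ℝ)*σ - γ) N := by
    rw [Finset.sum_range_succ]
    simp [Nat.choose_succ_self]
  rw [← Finset.mul_sum, hlast]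
  rw [gfc, gfc]
  have hf1 : ((k+1).factorial : ℝ) ≠ 0 := Nat.cast_ne_zero.mpr (Nat.factorial_ne_zero _)
  have hf2 : (k.factorial : ℝ) ≠ 0 := Nat.cast_ne_zero.mpr (Nat.factorial_ne_zero _)
  have hfs : ((k+1).factorial : ℝ) = ((k:ℝ)+1) * k.factorial := by
    rw [Nat.factorial_succ]; push_cast; ring
  rw [hfs]
  field_simp
  ring

lemma gfc_eq_zero_of_lt (σ γ : ℝ) : ∀ N k, N < k → gfc N k σ γ = 0 := by
  intro N
  induction N with
  | zero => intro k hk; obtain ⟨k', rfl⟩ : ∃ k', k = k' + 1 := ⟨k - 1, by omega⟩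
            exact gfc_zero_succ σ γ k'
  | succ N ih =>
    intro k hk
    obtain ⟨k', rfl⟩ : ∃ k', k = k' + 1 := ⟨k - 1, by omega⟩
    rw [gfc_rec, ih k' (by omega), ih (k'+1) (by omega)]
    ring

lemma psi_step {σ : ℝ} (hσ0 : σ ≠ 0) (γ : ℝ) (N : ℕ) (W : ℕ → ℝ) (j₀ : ℕ) :
    ∑ k ∈ Finset.range (N+1),
        (W (j₀+k+1) + ((N:ℝ) - k*σ - γ) * W (j₀+k)) * (gfc N k σ γ / σ^k)
    = ∑ k ∈ Finset.range (N+2), W (j₀+k) * (gfc (N+1) k σ γ / σ^k) := by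
  have hrec : ∀ k, gfc (N+1) (k+1) σ γ / σ^(k+1)
      = gfc N k σ γ / σ^k + ((N:ℝ) - (k+1)*σ - γ) * (gfc N (k+1) σ γ / σ^(k+1)) := by
    intro k
    rw [gfc_rec]
    have hp : (σ:ℝ)^(k+1) ≠ 0 := pow_ne_zero _ hσ0
    field_simp
    ring
  rw [Finset.sum_range_succ' (fun k => W (j₀+k) * (gfc (N+1) k σ γ / σ^k)) (N+1)]
  have h0 : W (j₀ + 0) * (gfc (N+1) 0 σ γ / σ^0)
      = W j₀ * (((N:ℝ) - 0*σ - γ) * (gfc N 0 σ γ / σ^0)) := by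
    rw [gfc_rec_zero]; ring
  rw [h0]
  have h1 : ∀ k ∈ Finset.range (N+1),
      W (j₀+(k+1)) * (gfc (N+1) (k+1) σ γ / σ^(k+1))
      = W (j₀+k+1) * (gfc N k σ γ / σ^k)
        + W (j₀+(k+1)) * (((N:ℝ) - (k+1)*σ - γ) * (gfc N (k+1) σ γ / σ^(k+1))) := by
    intro k _
    rw [hrec]; ring
  rw [Finset.sum_congr rfl h1, Finset.sum_add_distrib]
  have h2 : ∑ k ∈ Finset.range (N+1),
        W (j₀+(k+1)) * (((N:ℝ) - (k+1)*σ - γ) * (gfc N (k+1) σ γ / σ^(k+1)))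
       + W j₀ * (((N:ℝ) - 0*σ - γ) * (gfc N 0 σ γ / σ^0))
      = ∑ k ∈ Finset.range (N+2), W (j₀+k) * (((N:ℝ) - k*σ - γ) * (gfc N k σ γ / σ^k)) := by
    rw [Finset.sum_range_succ' (fun k => W (j₀+k) * (((N:ℝ) - k*σ - γ) * (gfc N k σ γ / σ^k))) (N+1)]
    push_cast
    congr 1
  rw [add_assoc, h2, Finset.sum_range_succ _ (N+1), gfc_eq_zero_of_lt σ γ N (N+1) (by omega)]
  simp only [mul_zero, zero_div, zero_mul, add_zero]
  rw [← Finset.sum_add_distrib]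
  refine Finset.sum_congr rfl fun k _ => ?_
  ring

end Arith

section Vid

lemma V_identity {σ : ℝ} (hσ0 : σ ≠ 0) (V : ℕ → ℕ → ℝ)
    (hVrec : ∀ N k, 1 ≤ k → k ≤ N →
      V N k = V (N + 1) (k + 1) + ((N : ℝ) - (k : ℝ) * σ) * V (N + 1) k) :
    ∀ (M N j : ℕ), 1 ≤ j → j ≤ N →
      V N j = ∑ k ∈ Finset.range (M+1),
        V (N+M) (j+k) * (gfc M k σ (-(N:ℝ) + j*σ) / σ^k) := by
  intro M
  induction M with
  | zero =>
    intro N j _ _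
    simp [gfc_zero_zero]
  | succ M ih =>
    intro N j hj1 hjN
    rw [ih N j hj1 hjN]
    set γ : ℝ := -(N:ℝ) + j*σ with hγ
    have hstep : ∀ k ∈ Finset.range (M+1),
        V (N+M) (j+k) * (gfc M k σ γ / σ^k)
        = (V (N+M+1) (j+k+1) + ((M:ℝ) - k*σ - γ) * V (N+M+1) (j+k)) * (gfc M k σ γ / σ^k) := by
      intro k hk
      have hk' : k ≤ M := by have := Finset.mem_range.mp hk; omega
      have := hVrec (N+M) (j+k) (by omega) (by omega)
      rw [this]
      have hco : ((N+M:ℕ):ℝ) - ((j+k:ℕ):ℝ) * σ = (M:ℝ) - k*σ - γ := by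
        push_cast [hγ]; ring
      rw [hco]
    rw [Finset.sum_congr rfl hstep]
    have := psi_step hσ0 γ M (fun c => V (N+M+1) c) j
    calc ∑ k ∈ Finset.range (M+1),
          (V (N+M+1) (j+k+1) + ((M:ℝ) - k*σ - γ) * V (N+M+1) (j+k)) * (gfc M k σ γ / σ^k)
        = ∑ k ∈ Finset.range (M+2), V (N+M+1) (j+k) * (gfc (M+1) k σ γ / σ^k) := this
      _ = ∑ k ∈ Finset.range (M+1+1), V (N+(M+1)) (j+k) * (gfc (M+1) k σ γ / σ^k) := rfl

end Vid

section SetAux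
variable {α : Type*} [DecidableEq α]

lemma setaux_sdiff_singleton {t : Finset α} {a : α} (ha : a ∉ t) :
    insert a t \ {a} = t := by
  ext x
  simp only [Finset.mem_sdiff, Finset.mem_insert, Finset.mem_singleton]
  constructor
  · rintro ⟨hx | hx, hne⟩
    · exact absurd hx hne
    · exact hx
  · intro hx
    exact ⟨Or.inr hx, fun h' => ha (h' ▸ hx)⟩

lemma setaux_singleton_union {t : Finset α} {a : α} :
    ({a} : Finset α) ∪ t = insert a t := by
  ext x
  simp only [Finset.mem_union, Finset.mem_singleton, Finset.mem_insert]

lemma setaux_insert_union_sdiff {t C : Finset α} {a : α} (hC : C ⊆ t) :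
    insert a C ∪ t \ C = insert a t := by
  ext x
  simp only [Finset.mem_union, Finset.mem_insert, Finset.mem_sdiff]
  constructor
  · rintro ((rfl | hx) | ⟨hx, -⟩)
    · exact Or.inl rfl
    · exact Or.inr (hC hx)
    · exact Or.inr hx
  · rintro (rfl | hx)
    · exact Or.inl (Or.inl rfl)
    · by_cases hxC : x ∈ C
      · exact Or.inl (Or.inr hxC)
      · exact Or.inr ⟨hx, hxC⟩

lemma setaux_insert_inter {C s₀ : Finset α} {a : α} (ha : a ∉ s₀) :
    insert a C ∩ s₀ = C ∩ s₀ := by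
  ext x
  simp only [Finset.mem_inter, Finset.mem_insert]
  constructor
  · rintro ⟨rfl | hx, hx0⟩
    · exact absurd hx0 ha
    · exact ⟨hx, hx0⟩
  · rintro ⟨hx, hx0⟩
    exact ⟨Or.inr hx, hx0⟩

lemma setaux_erase_inter {A s₀ : Finset α} {a : α} (ha : a ∉ s₀) :
    A.erase a ∩ s₀ = A ∩ s₀ := by
  ext x
  simp only [Finset.mem_inter, Finset.mem_erase]
  constructor
  · rintro ⟨⟨-, hxA⟩, hx0⟩
    exact ⟨hxA, hx0⟩
  · rintro ⟨hxA, hx0⟩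
    exact ⟨⟨fun h' => ha (h' ▸ hx0), hxA⟩, hx0⟩

lemma setaux_erase_union_sdiff {t A : Finset α} {a : α} (ha : a ∉ t)
    (hA : A ⊆ insert a t) (haA : a ∈ A) :
    A.erase a ∪ insert a t \ A = t := by
  ext x
  simp only [Finset.mem_union, Finset.mem_erase, Finset.mem_sdiff, Finset.mem_insert]
  constructor
  · rintro (⟨hxa, hxA⟩ | ⟨hx | hx, hxA⟩)
    · rcases Finset.mem_insert.mp (hA hxA) with rfl | hx
      · exact absurd rfl hxa
      · exact hx
    · exact absurd (hx ▸ haA) hxA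
    · exact hx
  · intro hx
    have hxa : x ≠ a := fun h' => ha (h' ▸ hx)
    by_cases hxA : x ∈ A
    · exact Or.inl ⟨hxa, hxA⟩
    · exact Or.inr ⟨Or.inr hx, hxA⟩

end SetAux

set_option linter.unusedSectionVars false
section PartitionBasics
variable {α : Type*} [DecidableEq α]

lemma partOn_block_ne_empty {t : Finset α} {P : Finset (Finset α)} (h : IsPartOn t P)
    {C : Finset α} (hC : C ∈ P) : C ≠ ∅ := fun h' => h.2.1 (h' ▸ hC)

lemma partOn_eq_of_mem {t : Finset α} {P : Finset (Finset α)} (h : IsPartOn t P)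
    {C D : Finset α} (hC : C ∈ P) (hD : D ∈ P) {x : α} (hxC : x ∈ C) (hxD : x ∈ D) : C = D := by
  have hx : x ∈ t := h.1 C hC hxC
  obtain ⟨E, -, hu⟩ := h.2.2 x hx
  rw [hu C ⟨hC, hxC⟩, hu D ⟨hD, hxD⟩]

lemma partOn_not_mem {t : Finset α} {P : Finset (Finset α)} (h : IsPartOn t P)
    {a : α} (ha : a ∉ t) {C : Finset α} (hC : C ∈ P) : a ∉ C :=
  fun hx => ha (h.1 C hC hx)

lemma partOn_singleton_not_mem {t : Finset α} {P : Finset (Finset α)} (h : IsPartOn t P)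
    {a : α} (ha : a ∉ t) : ({a} : Finset α) ∉ P :=
  fun hmem => partOn_not_mem h ha hmem (Finset.mem_singleton_self a)

lemma partOn_sum_card {t : Finset α} {P : Finset (Finset α)} (h : IsPartOn t P) :
    ∑ C ∈ P, C.card = t.card := by
  have ht : t = P.biUnion id := by
    ext x
    simp only [Finset.mem_biUnion, id]
    constructor
    · intro hx
      obtain ⟨C, ⟨hC, hxC⟩, -⟩ := h.2.2 x hx
      exact ⟨C, hC, hxC⟩
    · rintro ⟨C, hC, hxC⟩
      exact h.1 C hC hxC
  have hdisj : ∀ C ∈ P, ∀ D ∈ P, C ≠ D → Disjoint (id C) (id D) := fun C hC D hD hne =>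
    Finset.disjoint_left.mpr fun {x} hxC hxD => hne (partOn_eq_of_mem h hC hD hxC hxD)
  rw [ht]
  exact (Finset.card_biUnion hdisj).symm

lemma partOn_card_le {t : Finset α} {P : Finset (Finset α)} (h : IsPartOn t P) :
    P.card ≤ t.card := by
  rw [← partOn_sum_card h]
  calc P.card = ∑ _C ∈ P, 1 := by simp
    _ ≤ ∑ C ∈ P, C.card := Finset.sum_le_sum fun C hC =>
        Finset.card_pos.mpr (Finset.nonempty_of_ne_empty (partOn_block_ne_empty h hC))

lemma partOn_insert_block {t : Finset α} {Q : Finset (Finset α)} (h : IsPartOn t Q)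
    {X : Finset α} (hdisj : Disjoint X t) (hne : X ≠ ∅) : IsPartOn (X ∪ t) (insert X Q) := by
  refine ⟨?_, ?_, ?_⟩
  · intro C hC
    rcases Finset.mem_insert.mp hC with rfl | hC
    · exact Finset.subset_union_left
    · exact (h.1 C hC).trans Finset.subset_union_right
  · intro hmem
    rcases Finset.mem_insert.mp hmem with h' | h'
    · exact hne h'.symm
    · exact h.2.1 h'
  · intro x hx
    rcases Finset.mem_union.mp hx with hxX | hxt
    · refine ⟨X, ⟨Finset.mem_insert_self _ _, hxX⟩, ?_⟩
      rintro D ⟨hD, hxD⟩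
      rcases Finset.mem_insert.mp hD with rfl | hD
      · rfl
      · exact absurd (h.1 D hD hxD) (Finset.disjoint_left.mp hdisj hxX)
    · obtain ⟨C, ⟨hC, hxC⟩, hu⟩ := h.2.2 x hxt
      refine ⟨C, ⟨Finset.mem_insert_of_mem hC, hxC⟩, ?_⟩
      rintro D ⟨hD, hxD⟩
      rcases Finset.mem_insert.mp hD with rfl | hD
      · exact absurd hxt (Finset.disjoint_left.mp hdisj hxD)
      · exact hu D ⟨hD, hxD⟩

lemma partOn_erase_block {t : Finset α} {P : Finset (Finset α)} (h : IsPartOn t P)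
    {D : Finset α} (hD : D ∈ P) : IsPartOn (t \ D) (P.erase D) := by
  refine ⟨?_, fun hmem => h.2.1 (Finset.mem_of_mem_erase hmem), ?_⟩
  · intro C hC
    have hC' := Finset.mem_of_mem_erase hC
    have hne := Finset.ne_of_mem_erase hC
    intro x hx
    exact Finset.mem_sdiff.mpr ⟨h.1 C hC' hx, fun hxD => hne (partOn_eq_of_mem h hC' hD hx hxD)⟩
  · intro x hx
    obtain ⟨hxt, hxD⟩ := Finset.mem_sdiff.mp hx
    obtain ⟨C, ⟨hC, hxC⟩, hu⟩ := h.2.2 x hxt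
    have hCD : C ≠ D := fun h' => hxD (h' ▸ hxC)
    refine ⟨C, ⟨Finset.mem_erase.mpr ⟨hCD, hC⟩, hxC⟩, ?_⟩
    rintro E ⟨hE, hxE⟩
    exact hu E ⟨Finset.mem_of_mem_erase hE, hxE⟩

lemma mem_restrictPart {P : Finset (Finset α)} {s X : Finset α} :
    X ∈ restrictPart P s ↔ X ≠ ∅ ∧ ∃ C ∈ P, C ∩ s = X := by
  unfold restrictPart
  rw [Finset.mem_erase, Finset.mem_image]

lemma restrictPart_congr {P : Finset (Finset α)} {s s' : Finset α}
    (h : ∀ C ∈ P, C ∩ s = C ∩ s') : restrictPart P s = restrictPart P s' := by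
  unfold restrictPart
  rw [Finset.image_congr fun C hC => h C hC]

lemma restrictPart_insert_congr {P : Finset (Finset α)} {s X Y : Finset α} (h : X ∩ s = Y ∩ s) :
    restrictPart (insert X P) s = restrictPart (insert Y P) s := by
  unfold restrictPart
  rw [Finset.image_insert, Finset.image_insert, h]

lemma restrictPart_insert_empty {P : Finset (Finset α)} {s X : Finset α} (h : X ∩ s = ∅) :
    restrictPart (insert X P) s = restrictPart P s := by
  unfold restrictPart
  rw [Finset.image_insert, h, Finset.erase_insert_eq_erase]

lemma restrictPart_insert_ne {P : Finset (Finset α)} {s X : Finset α} (h : X ∩ s ≠ ∅) :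
    restrictPart (insert X P) s = insert (X ∩ s) (restrictPart P s) := by
  unfold restrictPart
  rw [Finset.image_insert, Finset.erase_insert_of_ne h]

lemma restrictPart_self {P : Finset (Finset α)} {s : Finset α}
    (hsub : ∀ C ∈ P, C ⊆ s) (hne : ∅ ∉ P) : restrictPart P s = P := by
  unfold restrictPart
  have himg : P.image (fun C => C ∩ s) = P := by
    ext X
    rw [Finset.mem_image]
    constructor
    · rintro ⟨C, hC, rfl⟩
      rw [Finset.inter_eq_left.mpr (hsub C hC)]
      exact hC
    · intro hX
      exact ⟨X, hX, Finset.inter_eq_left.mpr (hsub X hX)⟩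
  rw [himg, Finset.erase_eq_of_notMem hne]

end PartitionBasics

section ExtPdef
variable {α : Type*} [Fintype α] [DecidableEq α]

def ExtP (s₀ : Finset α) (π₀ : Finset (Finset α)) (s : Finset α) :
    Finset (Finset (Finset α)) :=
  Finset.univ.filter fun ρ => IsPartOn (s₀ ∪ s) ρ ∧ restrictPart ρ s₀ = π₀

lemma mem_ExtP {s₀ : Finset α} {π₀ : Finset (Finset α)} {s : Finset α}
    {ρ : Finset (Finset α)} :
    ρ ∈ ExtP s₀ π₀ s ↔ IsPartOn (s₀ ∪ s) ρ ∧ restrictPart ρ s₀ = π₀ := by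
  simp [ExtP]

lemma ExtP_empty {s₀ : Finset α} {π₀ : Finset (Finset α)} (hp : IsPartOn s₀ π₀) :
    ExtP s₀ π₀ ∅ = {π₀} := by
  ext ρ
  rw [mem_ExtP, Finset.mem_singleton, Finset.union_empty]
  constructor
  · rintro ⟨hpart, hres⟩
    rw [← hres]
    exact (restrictPart_self (fun C hC => hpart.1 C hC) hpart.2.1).symm
  · rintro rfl
    exact ⟨hp, restrictPart_self (fun C hC => hp.1 C hC) hp.2.1⟩

end ExtPdef

set_option maxHeartbeats 2000000
section InsertLemma
variable {α : Type*} [Fintype α] [DecidableEq α]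

lemma sum_ext_insert (s₀ : Finset α) (π₀ : Finset (Finset α)) (s : Finset α) (a : α)
    (ha0 : a ∉ s₀) (has : a ∉ s) (F : Finset (Finset α) → ℝ) :
    ∑ ρ ∈ ExtP s₀ π₀ (insert a s), F ρ
    = ∑ ρ' ∈ ExtP s₀ π₀ s,
        (F (insert {a} ρ') + ∑ C ∈ ρ', F (insert (insert a C) (ρ'.erase C))) := by
  have hat : a ∉ s₀ ∪ s := by
    rw [Finset.mem_union]; push_neg; exact ⟨ha0, has⟩
  have hground : s₀ ∪ insert a s = insert a (s₀ ∪ s) := by rw [Finset.union_insert]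
  rw [Finset.sum_add_distrib,
    ← Finset.sum_filter_add_sum_filter_not (ExtP s₀ π₀ (insert a s)) (fun ρ => {a} ∈ ρ)]
  congr 1
  · -- Part 1 : the element `a` forms a singleton block
    refine Finset.sum_nbij' (fun ρ => ρ.erase {a}) (fun ρ' => insert {a} ρ') ?_ ?_ ?_ ?_ ?_
    · intro ρ hρ
      obtain ⟨hρE, hsing⟩ := Finset.mem_filter.mp hρ
      obtain ⟨hpart, hres⟩ := mem_ExtP.mp hρE
      rw [hground] at hpart
      rw [mem_ExtP]
      constructor
      · have h1 := partOn_erase_block hpart hsing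
        rwa [setaux_sdiff_singleton hat] at h1
      · have hρeq : ρ = insert {a} (ρ.erase {a}) := (Finset.insert_erase hsing).symm
        rw [hρeq, restrictPart_insert_empty (Finset.singleton_inter_of_notMem ha0)] at hres
        exact hres
    · intro ρ' hρ'
      obtain ⟨hpart, hres⟩ := mem_ExtP.mp hρ'
      rw [Finset.mem_filter]
      refine ⟨mem_ExtP.mpr ⟨?_, ?_⟩, Finset.mem_insert_self _ _⟩
      · have h1 := partOn_insert_block hpart
          (Finset.disjoint_singleton_left.mpr hat) (Finset.singleton_ne_empty a)
        rw [setaux_singleton_union, ← hground] at h1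
        exact h1
      · rw [restrictPart_insert_empty (Finset.singleton_inter_of_notMem ha0)]
        exact hres
    · intro ρ hρ
      obtain ⟨-, hsing⟩ := Finset.mem_filter.mp hρ
      exact Finset.insert_erase hsing
    · intro ρ' hρ'
      obtain ⟨hpart, -⟩ := mem_ExtP.mp hρ'
      exact Finset.erase_insert (partOn_singleton_not_mem hpart hat)
    · intro ρ hρ
      obtain ⟨-, hsing⟩ := Finset.mem_filter.mp hρ
      rw [Finset.insert_erase hsing]
  · -- Part 2 : the element `a` joins an existing block
    rw [← Finset.sum_sigma (ExtP s₀ π₀ s) (fun ρ' => ρ')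
      (fun x => F (insert (insert a x.2) (x.1.erase x.2)))]
    refine (Finset.sum_bij (fun x hx => insert (insert a x.2) (x.1.erase x.2)) ?_ ?_ ?_ ?_).symm
    · -- membership
      rintro ⟨ρ', C⟩ hx
      obtain ⟨hρ'0, hC0⟩ := Finset.mem_sigma.mp hx
      have hρ' : ρ' ∈ ExtP s₀ π₀ s := hρ'0
      have hC : C ∈ ρ' := hC0
      obtain ⟨hpart0, hres0⟩ := mem_ExtP.mp hρ'
      have hpart : IsPartOn (s₀ ∪ s) ρ' := hpart0
      have hres : restrictPart ρ' s₀ = π₀ := hres0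
      have hCsub : C ⊆ s₀ ∪ s := hpart.1 C hC
      have hCne : C ≠ ∅ := partOn_block_ne_empty hpart hC
      have haC : a ∉ C := partOn_not_mem hpart hat hC
      rw [Finset.mem_filter]
      refine ⟨mem_ExtP.mpr ⟨?_, ?_⟩, ?_⟩
      · have h1 : IsPartOn ((s₀ ∪ s) \ C) (ρ'.erase C) := partOn_erase_block hpart hC
        have hdisj2 : Disjoint (insert a C) ((s₀ ∪ s) \ C) := by
          rw [Finset.disjoint_left]
          intro x hxins hxsd
          obtain ⟨hxg, hxnC⟩ := Finset.mem_sdiff.mp hxsd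
          rcases Finset.mem_insert.mp hxins with rfl | hx
          · exact hat hxg
          · exact hxnC hx
        have h2 := partOn_insert_block h1 hdisj2 (Finset.insert_ne_empty a C)
        rw [setaux_insert_union_sdiff hCsub, ← hground] at h2
        exact h2
      · have e1 : restrictPart (insert (insert a C) (ρ'.erase C)) s₀
            = restrictPart (insert C (ρ'.erase C)) s₀ := by
          exact restrictPart_insert_congr (setaux_insert_inter ha0)
        rw [e1, Finset.insert_erase hC]
        exact hres
      · -- {a} not a block
        intro hsing
        rcases Finset.mem_insert.mp hsing with h' | h'
        · have hsub : C ⊆ {a} := by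
            rw [h']; exact Finset.subset_insert _ _
          rcases Finset.subset_singleton_iff.mp hsub with rfl | rfl
          · exact hCne rfl
          · exact haC (Finset.mem_singleton_self a)
        · exact hat (hpart.1 {a} (Finset.mem_of_mem_erase h') (Finset.mem_singleton_self a))
    · -- injectivity
      rintro ⟨ρ₁, C₁⟩ hx₁ ⟨ρ₂, C₂⟩ hx₂ heq0
      obtain ⟨hρ₁0, hC₁0⟩ := Finset.mem_sigma.mp hx₁
      obtain ⟨hρ₂0, hC₂0⟩ := Finset.mem_sigma.mp hx₂
      have hρ₁ : ρ₁ ∈ ExtP s₀ π₀ s := hρ₁0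
      have hρ₂ : ρ₂ ∈ ExtP s₀ π₀ s := hρ₂0
      have hC₁ : C₁ ∈ ρ₁ := hC₁0
      have hC₂ : C₂ ∈ ρ₂ := hC₂0
      have heq : insert (insert a C₁) (ρ₁.erase C₁) = insert (insert a C₂) (ρ₂.erase C₂) := heq0
      have hpart₁ : IsPartOn (s₀ ∪ s) ρ₁ := (mem_ExtP.mp hρ₁).1
      have hpart₂ : IsPartOn (s₀ ∪ s) ρ₂ := (mem_ExtP.mp hρ₂).1
      have haC₁ : a ∉ C₁ := partOn_not_mem hpart₁ hat hC₁
      have haC₂ : a ∉ C₂ := partOn_not_mem hpart₂ hat hC₂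
      have hnm₁ : insert a C₁ ∉ ρ₁.erase C₁ := fun h' =>
        hat (hpart₁.1 _ (Finset.mem_of_mem_erase h') (Finset.mem_insert_self a C₁))
      have hnm₂ : insert a C₂ ∉ ρ₂.erase C₂ := fun h' =>
        hat (hpart₂.1 _ (Finset.mem_of_mem_erase h') (Finset.mem_insert_self a C₂))
      have hblock : insert a C₁ = insert a C₂ := by
        have h1 : insert a C₁ ∈ insert (insert a C₂) (ρ₂.erase C₂) := by
          rw [← heq]; exact Finset.mem_insert_self _ _
        rcases Finset.mem_insert.mp h1 with h' | h'
        · exact h'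
        · exact absurd h' (fun hmem =>
            hat (hpart₂.1 _ (Finset.mem_of_mem_erase hmem) (Finset.mem_insert_self a C₁)))
      have hCeq : C₁ = C₂ := by
        have h2 := congrArg (fun T => Finset.erase T a) hblock
        simpa [Finset.erase_insert haC₁, Finset.erase_insert haC₂] using h2
      subst hCeq
      have herase : ρ₁.erase C₁ = ρ₂.erase C₁ := by
        have h2 := congrArg (fun T => Finset.erase T (insert a C₁)) heq
        simpa [Finset.erase_insert hnm₁, Finset.erase_insert hnm₂] using h2
      have hρeq : ρ₁ = ρ₂ := by
        rw [← Finset.insert_erase hC₁, ← Finset.insert_erase hC₂, herase]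
      subst hρeq
      rfl
    · -- surjectivity
      intro ρ hρ
      obtain ⟨hρE, hsing⟩ := Finset.mem_filter.mp hρ
      obtain ⟨hpart0, hres⟩ := mem_ExtP.mp hρE
      rw [hground] at hpart0
      have hpart : IsPartOn (insert a (s₀ ∪ s)) ρ := hpart0
      have hamem : a ∈ insert a (s₀ ∪ s) := Finset.mem_insert_self _ _
      obtain ⟨A, ⟨hA, haA⟩, -⟩ := hpart.2.2 a hamem
      have hAne : A ≠ {a} := fun h' => hsing (h' ▸ hA)
      have hCne : A.erase a ≠ ∅ := by
        rw [Ne, Finset.erase_eq_empty_iff]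
        push_neg
        exact ⟨Finset.nonempty_of_ne_empty (partOn_block_ne_empty hpart hA), hAne⟩
      have hCnm : A.erase a ∉ ρ.erase A := by
        intro h'
        obtain ⟨x, hx⟩ := Finset.nonempty_of_ne_empty hCne
        have hxA : x ∈ A := Finset.mem_of_mem_erase hx
        exact (Finset.ne_of_mem_erase h')
          (partOn_eq_of_mem hpart (Finset.mem_of_mem_erase h') hA hx hxA)
      have hρ'mem : insert (A.erase a) (ρ.erase A) ∈ ExtP s₀ π₀ s := by
        rw [mem_ExtP]
        constructor
        · have h1 := partOn_erase_block hpart hA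
          have hdisj3 : Disjoint (A.erase a) (insert a (s₀ ∪ s) \ A) := by
            rw [Finset.disjoint_left]
            intro x hx hx'
            exact (Finset.mem_sdiff.mp hx').2 (Finset.mem_of_mem_erase hx)
          have h2 := partOn_insert_block h1 hdisj3 hCne
          rwa [setaux_erase_union_sdiff hat (hpart.1 A hA) haA] at h2
        · have e1 : restrictPart (insert (A.erase a) (ρ.erase A)) s₀
              = restrictPart (insert A (ρ.erase A)) s₀ := by
            exact restrictPart_insert_congr (setaux_erase_inter ha0)
          rw [e1, Finset.insert_erase hA]
          exact hres
      refine ⟨⟨insert (A.erase a) (ρ.erase A), A.erase a⟩, Finset.mem_sigma.mpr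
        ⟨hρ'mem, Finset.mem_insert_self _ _⟩, ?_⟩
      have e2 : insert a (A.erase a) = A := Finset.insert_erase haA
      have e3 : (insert (A.erase a) (ρ.erase A)).erase (A.erase a) = ρ.erase A :=
        Finset.erase_insert hCnm
      show insert (insert a (A.erase a)) ((insert (A.erase a) (ρ.erase A)).erase (A.erase a)) = ρ
      rw [e2, e3, Finset.insert_erase hA]
    · intro x hx
      rfl
end InsertLemma

section Master
variable {α : Type*} [Fintype α] [DecidableEq α]

lemma master_sum {σ : ℝ} (hσ0 : σ ≠ 0)
    (s₀ : Finset α) (π₀ : Finset (Finset α)) (hp : IsPartOn s₀ π₀) (s : Finset α) :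
    Disjoint s s₀ → ∀ W : ℕ → ℝ,
      ∑ ρ ∈ ExtP s₀ π₀ s, W ρ.card * ∏ C ∈ ρ, risingFac (1-σ) (C.card - 1)
      = (∏ C ∈ π₀, risingFac (1-σ) (C.card - 1)) *
        ∑ k ∈ Finset.range (s.card+1),
          W (π₀.card + k) * (gfc s.card k σ (-(s₀.card:ℝ) + π₀.card*σ) / σ^k) := by
  induction s using Finset.induction_on with
  | empty =>
    intro _ W
    rw [ExtP_empty hp, Finset.sum_singleton]
    simp [gfc_zero_zero]
    ring
  | @insert a s' ha ih =>
    intro hdisj W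
    have ha0 : a ∉ s₀ := Finset.disjoint_left.mp hdisj (Finset.mem_insert_self a s')
    have hd' : Disjoint s' s₀ :=
      Finset.disjoint_of_subset_left (Finset.subset_insert a s') hdisj
    have hat : a ∉ s₀ ∪ s' := by
      rw [Finset.mem_union]; push_neg; exact ⟨ha0, ha⟩
    rw [sum_ext_insert s₀ π₀ s' a ha0 ha
      (fun ρ => W ρ.card * ∏ C ∈ ρ, risingFac (1-σ) (C.card - 1))]
    have hterm : ∀ ρ' ∈ ExtP s₀ π₀ s',
        (W (insert {a} ρ').card * ∏ C ∈ insert {a} ρ', risingFac (1-σ) (C.card - 1)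
          + ∑ C ∈ ρ', W (insert (insert a C) (ρ'.erase C)).card *
              ∏ D ∈ insert (insert a C) (ρ'.erase C), risingFac (1-σ) (D.card - 1))
        = (W (ρ'.card+1) + (((s₀.card:ℝ) + (s'.card:ℝ)) - (ρ'.card:ℝ)*σ) * W ρ'.card) *
            ∏ C ∈ ρ', risingFac (1-σ) (C.card - 1) := by
      intro ρ' hρ'
      obtain ⟨hpart, -⟩ := mem_ExtP.mp hρ'
      have hsing : ({a} : Finset α) ∉ ρ' := partOn_singleton_not_mem hpart hat
      have e1 : (insert {a} ρ').card = ρ'.card + 1 := Finset.card_insert_of_notMem hsing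
      have e2 : ∏ C ∈ insert {a} ρ', risingFac (1-σ) (C.card - 1)
          = ∏ C ∈ ρ', risingFac (1-σ) (C.card - 1) := by
        rw [Finset.prod_insert hsing]
        simp [risingFac_zero]
      have e3 : ∀ C ∈ ρ', W (insert (insert a C) (ρ'.erase C)).card *
            ∏ D ∈ insert (insert a C) (ρ'.erase C), risingFac (1-σ) (D.card - 1)
          = (((C.card:ℝ) - σ) * W ρ'.card) * ∏ D ∈ ρ', risingFac (1-σ) (D.card - 1) := by
        intro C hC
        have haC : a ∉ C := partOn_not_mem hpart hat hC
        have hC1 : 1 ≤ C.card :=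
          Finset.card_pos.mpr (Finset.nonempty_of_ne_empty (partOn_block_ne_empty hpart hC))
        have hnm : insert a C ∉ ρ'.erase C := fun h' =>
          hat (hpart.1 _ (Finset.mem_of_mem_erase h') (Finset.mem_insert_self a C))
        have hcard : (insert (insert a C) (ρ'.erase C)).card = ρ'.card := by
          rw [Finset.card_insert_of_notMem hnm, Finset.card_erase_of_mem hC]
          have : 1 ≤ ρ'.card := Finset.card_pos.mpr ⟨C, hC⟩
          omega
        have hrf : risingFac (1-σ) ((insert a C).card - 1)
            = ((C.card:ℝ) - σ) * risingFac (1-σ) (C.card - 1) := by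
          rw [Finset.card_insert_of_notMem haC]
          have h2 : C.card + 1 - 1 = (C.card - 1) + 1 := by omega
          rw [h2, risingFac_succ]
          have h3 : ((C.card - 1 : ℕ) : ℝ) = (C.card:ℝ) - 1 := by
            rw [Nat.cast_sub hC1, Nat.cast_one]
          rw [h3]; ring
        rw [hcard, Finset.prod_insert hnm, hrf, ← Finset.mul_prod_erase ρ' _ hC]
        ring
      rw [e1, e2, Finset.sum_congr rfl e3, ← Finset.sum_mul, ← Finset.sum_mul]
      have e4 : ∑ C ∈ ρ', ((C.card:ℝ) - σ) = ((s₀.card:ℝ) + (s'.card:ℝ)) - (ρ'.card:ℝ)*σ := by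
        rw [Finset.sum_sub_distrib, Finset.sum_const, ← Nat.cast_sum, partOn_sum_card hpart,
          Finset.card_union_of_disjoint hd'.symm, nsmul_eq_mul]
        push_cast; ring
      rw [e4]
      ring
    rw [Finset.sum_congr rfl hterm]
    have key := ih hd' (fun c => W (c+1) + (((s₀.card:ℝ) + (s'.card:ℝ)) - (c:ℝ)*σ) * W c)
    rw [key]
    congr 1
    rw [Finset.card_insert_of_notMem ha]
    have hco : ∀ k ∈ Finset.range (s'.card+1),
        (W (π₀.card+k+1) + (((s₀.card:ℝ) + (s'.card:ℝ)) - ((π₀.card+k:ℕ):ℝ)*σ) * W (π₀.card+k))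
            * (gfc s'.card k σ (-(s₀.card:ℝ) + π₀.card*σ) / σ^k)
        = (W (π₀.card+k+1) + (((s'.card:ℕ):ℝ) - (k:ℝ)*σ - (-(s₀.card:ℝ) + π₀.card*σ))
            * W (π₀.card+k)) * (gfc s'.card k σ (-(s₀.card:ℝ) + π₀.card*σ) / σ^k) := by
      intro k _
      push_cast
      ring
    rw [Finset.sum_congr rfl hco]
    exact psi_step hσ0 (-(s₀.card:ℝ) + π₀.card*σ) s'.card W π₀.card

end Master

section BlockRemoval
variable {α : Type*} [DecidableEq α]

lemma setaux_block_union {s₀ s Bi A : Finset α} (hB : Bi ⊆ s₀) (hA : A ⊆ s) :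
    (Bi ∪ A) ∪ ((s₀ \ Bi) ∪ (s \ A)) = s₀ ∪ s := by
  ext x
  simp only [Finset.mem_union, Finset.mem_sdiff]
  constructor
  · rintro ((hx | hx) | (⟨hx, -⟩ | ⟨hx, -⟩))
    · exact Or.inl (hB hx)
    · exact Or.inr (hA hx)
    · exact Or.inl hx
    · exact Or.inr hx
  · rintro (hx | hx)
    · by_cases hxB : x ∈ Bi
      · exact Or.inl (Or.inl hxB)
      · exact Or.inr (Or.inl ⟨hx, hxB⟩)
    · by_cases hxA : x ∈ A
      · exact Or.inl (Or.inr hxA)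
      · exact Or.inr (Or.inr ⟨hx, hxA⟩)

lemma setaux_block_disj {s₀ s Bi A : Finset α} (hB : Bi ⊆ s₀) (hA : A ⊆ s)
    (hd : Disjoint s s₀) :
    Disjoint (Bi ∪ A) ((s₀ \ Bi) ∪ (s \ A)) := by
  rw [Finset.disjoint_left]
  intro x hx hx'
  rcases Finset.mem_union.mp hx with hxB | hxA
  · rcases Finset.mem_union.mp hx' with h' | h'
    · exact (Finset.mem_sdiff.mp h').2 hxB
    · exact Finset.disjoint_left.mp hd (Finset.mem_sdiff.mp h').1 (hB hxB)
  · rcases Finset.mem_union.mp hx' with h' | h'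
    · exact Finset.disjoint_left.mp hd (hA hxA) (Finset.mem_sdiff.mp h').1
    · exact (Finset.mem_sdiff.mp h').2 hxA

lemma setaux_block_inter {s₀ s Bi A : Finset α} (hB : Bi ⊆ s₀) (hA : A ⊆ s)
    (hd : Disjoint s s₀) : (Bi ∪ A) ∩ s₀ = Bi := by
  ext x
  simp only [Finset.mem_inter, Finset.mem_union]
  constructor
  · rintro ⟨hx | hx, hx0⟩
    · exact hx
    · exact absurd hx0 (Finset.disjoint_left.mp hd (hA hx))
  · intro hx
    exact ⟨Or.inl hx, hB hx⟩

lemma setaux_block_sdiff {s₀ s Bi A : Finset α} (hB : Bi ⊆ s₀) (hA : A ⊆ s)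
    (hd : Disjoint s s₀) : (Bi ∪ A) \ s₀ = A := by
  ext x
  simp only [Finset.mem_sdiff, Finset.mem_union]
  constructor
  · rintro ⟨hx | hx, hx0⟩
    · exact absurd (hB hx) hx0
    · exact hx
  · intro hx
    exact ⟨Or.inr hx, fun h' => Finset.disjoint_left.mp hd (hA hx) h'⟩

lemma setaux_ground_sdiff {s₀ s Bi A : Finset α} (hB : Bi ⊆ s₀) (hA : A ⊆ s)
    (hd : Disjoint s s₀) : (s₀ ∪ s) \ (Bi ∪ A) = (s₀ \ Bi) ∪ (s \ A) := by
  ext x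
  simp only [Finset.mem_sdiff, Finset.mem_union]
  constructor
  · rintro ⟨hx | hx, hn⟩
    · exact Or.inl ⟨hx, fun h' => hn (Or.inl h')⟩
    · exact Or.inr ⟨hx, fun h' => hn (Or.inr h')⟩
  · rintro (⟨hx, hn⟩ | ⟨hx, hn⟩)
    · refine ⟨Or.inl hx, ?_⟩
      rintro (h' | h')
      · exact hn h'
      · exact Finset.disjoint_left.mp hd (hA h') hx
    · refine ⟨Or.inr hx, ?_⟩
      rintro (h' | h')
      · exact Finset.disjoint_left.mp hd hx (hB h')
      · exact hn h'

variable [Fintype α]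

lemma sum_block_removal (s₀ : Finset α) (π₀ : Finset (Finset α)) (hp : IsPartOn s₀ π₀)
    (s : Finset α) (hd : Disjoint s s₀) (Bi : Finset α) (hBi : Bi ∈ π₀) (l : ℕ)
    (F : Finset (Finset α) → ℝ) :
    ∑ ρ ∈ (ExtP s₀ π₀ s).filter
        (fun ρ => (∑ C ∈ ρ.filter (fun C => Bi ⊆ C), (C \ s₀).card) = l), F ρ
    = ∑ A ∈ s.powersetCard l, ∑ ρ'' ∈ ExtP (s₀ \ Bi) (π₀.erase Bi) (s \ A),
        F (insert (Bi ∪ A) ρ'') := by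
  have hBne : Bi ≠ ∅ := partOn_block_ne_empty hp hBi
  have hBsub : Bi ⊆ s₀ := hp.1 Bi hBi
  -- elements of Bi are not in any block of a reduced partition
  have hkey : ∀ (A : Finset α), A ⊆ s → ∀ {ρ'' : Finset (Finset α)},
      ρ'' ∈ ExtP (s₀ \ Bi) (π₀.erase Bi) (s \ A) →
      ∀ D ∈ ρ'', ∀ x ∈ Bi, x ∉ D := by
    intro A hA ρ'' hρ'' D hD x hxB hxD
    obtain ⟨hpart'', -⟩ := mem_ExtP.mp hρ''
    have := hpart''.1 D hD hxD
    rcases Finset.mem_union.mp this with h' | h'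
    · exact (Finset.mem_sdiff.mp h').2 hxB
    · exact Finset.disjoint_left.mp hd (Finset.mem_sdiff.mp h').1 (hBsub hxB)
  rw [← Finset.sum_sigma (s.powersetCard l) (fun A => ExtP (s₀ \ Bi) (π₀.erase Bi) (s \ A))
    (fun x => F (insert (Bi ∪ x.1) x.2))]
  refine (Finset.sum_bij (fun x hx => insert (Bi ∪ x.1) x.2) ?_ ?_ ?_ ?_).symm
  · -- membership
    rintro ⟨A, ρ''⟩ hx
    obtain ⟨hA0, hρ''0⟩ := Finset.mem_sigma.mp hx
    have hA : A ∈ s.powersetCard l := hA0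
    have hρ'' : ρ'' ∈ ExtP (s₀ \ Bi) (π₀.erase Bi) (s \ A) := hρ''0
    obtain ⟨hAs, hAcard⟩ := Finset.mem_powersetCard.mp hA
    obtain ⟨hpart'', hres''⟩ := mem_ExtP.mp hρ''
    have hXne : Bi ∪ A ≠ ∅ := fun h' => hBne (Finset.union_eq_empty.mp h').1
    have hnotB : ∀ D ∈ ρ'', ∀ x ∈ Bi, x ∉ D := hkey A hAs hρ''
    rw [Finset.mem_filter]
    refine ⟨mem_ExtP.mpr ⟨?_, ?_⟩, ?_⟩
    · have h1 := partOn_insert_block hpart'' (setaux_block_disj hBsub hAs hd) hXne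
      rwa [setaux_block_union hBsub hAs] at h1
    · rw [restrictPart_insert_ne (by rw [setaux_block_inter hBsub hAs hd]; exact hBne),
        setaux_block_inter hBsub hAs hd]
      have e1 : restrictPart ρ'' s₀ = restrictPart ρ'' (s₀ \ Bi) := by
        refine restrictPart_congr fun C hC => ?_
        ext x
        simp only [Finset.mem_inter, Finset.mem_sdiff]
        constructor
        · rintro ⟨hxC, hx0⟩
          exact ⟨hxC, hx0, fun h' => hnotB C hC x h' hxC⟩
        · rintro ⟨hxC, hx0, -⟩
          exact ⟨hxC, hx0⟩
      rw [e1, hres'', Finset.insert_erase hBi]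
    · have e2 : (insert (Bi ∪ A) ρ'').filter (fun C => Bi ⊆ C) = {Bi ∪ A} := by
        ext D
        simp only [Finset.mem_filter, Finset.mem_insert, Finset.mem_singleton]
        constructor
        · rintro ⟨rfl | hD, hBD⟩
          · rfl
          · obtain ⟨x, hxB⟩ := Finset.nonempty_of_ne_empty hBne
            exact absurd (hBD hxB) (hnotB D hD x hxB)
        · rintro rfl
          exact ⟨Or.inl rfl, Finset.subset_union_left⟩
      rw [e2, Finset.sum_singleton, setaux_block_sdiff hBsub hAs hd, hAcard]
  · -- injectivity
    rintro ⟨A₁, ρ₁⟩ hx₁ ⟨A₂, ρ₂⟩ hx₂ heq0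
    obtain ⟨hA₁0, hρ₁0⟩ := Finset.mem_sigma.mp hx₁
    obtain ⟨hA₂0, hρ₂0⟩ := Finset.mem_sigma.mp hx₂
    have hA₁ : A₁ ∈ s.powersetCard l := hA₁0
    have hA₂ : A₂ ∈ s.powersetCard l := hA₂0
    have hρ₁ : ρ₁ ∈ ExtP (s₀ \ Bi) (π₀.erase Bi) (s \ A₁) := hρ₁0
    have hρ₂ : ρ₂ ∈ ExtP (s₀ \ Bi) (π₀.erase Bi) (s \ A₂) := hρ₂0
    obtain ⟨hAs₁, -⟩ := Finset.mem_powersetCard.mp hA₁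
    obtain ⟨hAs₂, -⟩ := Finset.mem_powersetCard.mp hA₂
    have heq : insert (Bi ∪ A₁) ρ₁ = insert (Bi ∪ A₂) ρ₂ := heq0
    obtain ⟨x0, hx0B⟩ := Finset.nonempty_of_ne_empty hBne
    have hn₁ : Bi ∪ A₁ ∉ ρ₁ := fun h' =>
      hkey A₁ hAs₁ hρ₁ _ h' x0 hx0B (Finset.mem_union_left _ hx0B)
    have hn₂ : Bi ∪ A₂ ∉ ρ₂ := fun h' =>
      hkey A₂ hAs₂ hρ₂ _ h' x0 hx0B (Finset.mem_union_left _ hx0B)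
    have hblock : Bi ∪ A₁ = Bi ∪ A₂ := by
      have h1 : Bi ∪ A₁ ∈ insert (Bi ∪ A₂) ρ₂ := by
        rw [← heq]; exact Finset.mem_insert_self _ _
      rcases Finset.mem_insert.mp h1 with h' | h'
      · exact h'
      · exact absurd (Finset.mem_union_left _ hx0B) (hkey A₂ hAs₂ hρ₂ _ h' x0 hx0B)
    have hAeq : A₁ = A₂ := by
      rw [← setaux_block_sdiff hBsub hAs₁ hd, hblock, setaux_block_sdiff hBsub hAs₂ hd]
    subst hAeq
    have hρeq : ρ₁ = ρ₂ := by
      have h2 := congrArg (fun T => Finset.erase T (Bi ∪ A₁)) heq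
      simpa [Finset.erase_insert hn₁, Finset.erase_insert hn₂] using h2
    subst hρeq
    rfl
  · -- surjectivity
    intro ρ hρ
    obtain ⟨hρE, hcnt⟩ := Finset.mem_filter.mp hρ
    obtain ⟨hpart, hres⟩ := mem_ExtP.mp hρE
    have hBmem : Bi ∈ restrictPart ρ s₀ := by rw [hres]; exact hBi
    obtain ⟨-, D, hD, hDcap⟩ := mem_restrictPart.mp hBmem
    have hBiD : Bi ⊆ D := by rw [← hDcap]; exact Finset.inter_subset_left
    have hfilt : ρ.filter (fun C => Bi ⊆ C) = {D} := by
      ext C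
      simp only [Finset.mem_filter, Finset.mem_singleton]
      constructor
      · rintro ⟨hC, hBC⟩
        obtain ⟨x, hxB⟩ := Finset.nonempty_of_ne_empty hBne
        exact partOn_eq_of_mem hpart hC hD (hBC hxB) (hBiD hxB)
      · rintro rfl
        exact ⟨hD, hBiD⟩
    rw [hfilt, Finset.sum_singleton] at hcnt
    set A := D \ s₀ with hAdef
    have hAs : A ⊆ s := by
      intro x hx
      obtain ⟨hxD, hx0⟩ := Finset.mem_sdiff.mp hx
      rcases Finset.mem_union.mp (hpart.1 D hD hxD) with h' | h'
      · exact absurd h' hx0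
      · exact h'
    have hDeq : Bi ∪ A = D := by
      rw [← hDcap, hAdef]
      ext x
      simp only [Finset.mem_union, Finset.mem_inter, Finset.mem_sdiff]
      constructor
      · rintro (⟨hx, -⟩ | ⟨hx, -⟩) <;> exact hx
      · intro hx
        by_cases hx0 : x ∈ s₀
        · exact Or.inl ⟨hx, hx0⟩
        · exact Or.inr ⟨hx, hx0⟩
    have hAmem : A ∈ s.powersetCard l := Finset.mem_powersetCard.mpr ⟨hAs, hcnt⟩
    have hDn : ∀ C ∈ ρ.erase D, ∀ x ∈ Bi, x ∉ C := by
      intro C hC x hxB hxC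
      exact (Finset.ne_of_mem_erase hC)
        (partOn_eq_of_mem hpart (Finset.mem_of_mem_erase hC) hD hxC (hBiD hxB))
    have hρ''mem : ρ.erase D ∈ ExtP (s₀ \ Bi) (π₀.erase Bi) (s \ A) := by
      rw [mem_ExtP]
      constructor
      · have h1 := partOn_erase_block hpart hD
        rwa [← hDeq, setaux_ground_sdiff hBsub hAs hd, hDeq] at h1
      · have e1 : restrictPart (ρ.erase D) (s₀ \ Bi) = restrictPart (ρ.erase D) s₀ := by
          refine restrictPart_congr fun C hC => ?_
          ext x
          simp only [Finset.mem_inter, Finset.mem_sdiff]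
          constructor
          · rintro ⟨hxC, hx0, -⟩
            exact ⟨hxC, hx0⟩
          · rintro ⟨hxC, hx0⟩
            exact ⟨hxC, hx0, fun h' => hDn C hC x h' hxC⟩
        rw [e1]
        ext X
        rw [mem_restrictPart, Finset.mem_erase, ← hres, mem_restrictPart]
        constructor
        · rintro ⟨hXne, C, hC, hcap⟩
          refine ⟨?_, hXne, C, Finset.mem_of_mem_erase hC, hcap⟩
          rintro rfl
          obtain ⟨x, hxB⟩ := Finset.nonempty_of_ne_empty hBne
          have hxC : x ∈ C := by
            rw [← hcap] at hxB
            exact (Finset.mem_inter.mp hxB).1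
          exact hDn C hC x hxB hxC
        · rintro ⟨hXB, hXne, C, hC, hcap⟩
          refine ⟨hXne, C, Finset.mem_erase.mpr ⟨?_, hC⟩, hcap⟩
          rintro rfl
          exact hXB (by rw [← hcap, hDcap])
    refine ⟨⟨A, ρ.erase D⟩, Finset.mem_sigma.mpr ⟨hAmem, hρ''mem⟩, ?_⟩
    show insert (Bi ∪ A) (ρ.erase D) = ρ
    rw [hDeq, Finset.insert_erase hD]
  · intro x hx
    rfl

end BlockRemoval

/-- expected number of old species re-observed with frequency `l`,
given complete information. -/
theorem looking_backward_freq_estimator_complete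
    (n m j : ℕ) (hn : 1 ≤ n) (hm : 1 ≤ m)
    (σ : ℝ) (hσ1 : σ < 1) (hσ0 : σ ≠ 0)
    (V : ℕ → ℕ → ℝ) (hV11 : V 1 1 = 1)
    (hVnn : ∀ N k, 1 ≤ k → k ≤ N → 0 ≤ V N k)
    (hVrec : ∀ N k, 1 ≤ k → k ≤ N →
      V N k = V (N + 1) (k + 1) + ((N : ℝ) - (k : ℝ) * σ) * V (N + 1) k)
    (B : Fin j → Finset (Fin (n + m))) (hBinj : Function.Injective B)
    (hπ : IsPartOn (oldSet n m) (Finset.image B Finset.univ))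
    (hVnj : 0 < V n j)
    (l : ℕ) (hl : l ≤ m) :
    condExpPi σ V n m (Finset.image B Finset.univ)
        (fun ρ => (RlcntB n m j l B ρ : ℝ)) =
      (Nat.choose m l : ℝ) *
        ∑ i ∈ Finset.Icc 1 n,
          ((Finset.univ.filter fun ℓ : Fin j => (B ℓ).card = i).card : ℝ) *
            risingFac ((i : ℝ) - σ) l *
            ∑ k ∈ Finset.range (m + 1),
              V (n + m) (j + k) / V n j *
                (gfc (m - l) k σ (-(n : ℝ) + (i : ℝ) + ((j : ℝ) - 1) * σ) / σ ^ k) := by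
  set old : Finset (Fin (n+m)) := oldSet n m with hold
  set π : Finset (Finset (Fin (n+m))) := Finset.image B Finset.univ with hπdef
  set new : Finset (Fin (n+m)) := Finset.univ \ old with hnew
  -- basic facts
  have F1 : old.card = n := by
    have he : old = (Finset.range n).attachFin (fun x hx => by
        have := Finset.mem_range.mp hx; omega) := by
      ext y
      simp [hold, oldSet, Finset.mem_attachFin, Finset.mem_range, Finset.mem_filter]
    rw [he, Finset.card_attachFin, Finset.card_range]
  have F2 : new.card = m := by
    rw [hnew, Finset.card_sdiff_of_subset (Finset.subset_univ old), Finset.card_univ,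
      Fintype.card_fin, F1]
    omega
  have F3 : Disjoint new old := Finset.sdiff_disjoint
  have F4 : old ∪ new = Finset.univ := by
    rw [hnew, Finset.union_sdiff_of_subset (Finset.subset_univ old)]
  have F6 : π.card = j := by
    rw [hπdef, Finset.card_image_of_injective _ hBinj, Finset.card_univ, Fintype.card_fin]
  have hj1 : 1 ≤ j := by
    by_contra hcon
    have hj0 : j = 0 := by omega
    have hx : (⟨0, by omega⟩ : Fin (n+m)) ∈ old := by
      simp only [hold, oldSet]
      refine Finset.mem_filter.mpr ⟨Finset.mem_univ _, ?_⟩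
      show (0:ℕ) < n
      omega
    obtain ⟨C, ⟨hC, -⟩, -⟩ := hπ.2.2 _ hx
    rw [Finset.mem_image] at hC
    obtain ⟨i, -, -⟩ := hC
    exact absurd i.2 (by omega)
  have F8 : j ≤ n := by
    have := partOn_card_le hπ
    rw [F1] at this
    rw [← F6]
    exact this
  have F10 : ∀ i : Fin j, B i ∈ π := fun i =>
    Finset.mem_image.mpr ⟨i, Finset.mem_univ _, rfl⟩
  have F10e : ∀ i : Fin j, B i ≠ ∅ := fun i => partOn_block_ne_empty hπ (F10 i)
  have F10s : ∀ i : Fin j, B i ⊆ old := fun i => hπ.1 _ (F10 i)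
  have hci1 : ∀ i : Fin j, 1 ≤ (B i).card := fun i =>
    Finset.card_pos.mpr (Finset.nonempty_of_ne_empty (F10e i))
  have hcin : ∀ i : Fin j, (B i).card ≤ n := fun i => by
    have h := Finset.card_le_card (F10s i)
    rw [F1] at h
    exact h
  have hExt : extensions n m π = ExtP old π new := by
    ext ρ
    simp only [extensions, ExtP, Finset.mem_filter, Finset.mem_univ, true_and, F4, ← hold]
  have hGpos : 0 < ∏ C ∈ π, risingFac (1-σ) (C.card - 1) :=
    Finset.prod_pos fun C _ => risingFac_pos hσ1 _
  -- Denominator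
  have hden : ∑ ρ ∈ extensions n m π, gibbsW σ (V (n+m)) ρ
      = (∏ C ∈ π, risingFac (1-σ) (C.card - 1)) * V n j := by
    rw [hExt]
    calc ∑ ρ ∈ ExtP old π new, gibbsW σ (V (n+m)) ρ
        = ∑ ρ ∈ ExtP old π new, V (n+m) ρ.card * ∏ C ∈ ρ, risingFac (1-σ) (C.card-1) := rfl
      _ = (∏ C ∈ π, risingFac (1-σ) (C.card-1)) *
          ∑ k ∈ Finset.range (new.card+1),
            V (n+m) (π.card + k) * (gfc new.card k σ (-(old.card:ℝ) + π.card*σ) / σ^k) :=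
          master_sum hσ0 old π hπ new F3 (V (n+m))
      _ = (∏ C ∈ π, risingFac (1-σ) (C.card-1)) * V n j := by
          rw [F1, F2, F6]
          exact congrArg _ (V_identity hσ0 V hVrec m n j hj1 F8).symm
  -- Numerator : split by block index
  have hsplit : ∑ ρ ∈ ExtP old π new, (RlcntB n m j l B ρ : ℝ) * gibbsW σ (V (n+m)) ρ
      = ∑ i : Fin j, ∑ ρ ∈ (ExtP old π new).filter (fun ρ => Scount n m (B i) ρ = l),
          gibbsW σ (V (n+m)) ρ := by
    have e1 : ∀ ρ ∈ ExtP old π new, (RlcntB n m j l B ρ : ℝ) * gibbsW σ (V (n+m)) ρ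
        = ∑ i : Fin j, (if Scount n m (B i) ρ = l then gibbsW σ (V (n+m)) ρ else 0) := by
      intro ρ _
      simp only [RlcntB, Finset.card_filter]
      push_cast
      rw [Finset.sum_mul]
      refine Finset.sum_congr rfl fun i _ => ?_
      split
      · rw [one_mul]
      · rw [zero_mul]
    rw [Finset.sum_congr rfl e1, Finset.sum_comm]
    exact Finset.sum_congr rfl fun i _ => (Finset.sum_filter _ _).symm
  -- per-block evaluation
  have hstep2 : ∀ i : Fin j,
      ∑ ρ ∈ (ExtP old π new).filter (fun ρ => Scount n m (B i) ρ = l),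
          gibbsW σ (V (n+m)) ρ
      = (Nat.choose m l : ℝ) * (risingFac (1-σ) ((B i).card - 1) *
          (risingFac (((B i).card:ℝ) - σ) l *
            ((∏ C ∈ π.erase (B i), risingFac (1-σ) (C.card-1)) *
              ∑ k ∈ Finset.range (m+1), V (n+m) (j+k) *
                (gfc (m-l) k σ (-(n:ℝ) + ((B i).card:ℝ) + ((j:ℝ)-1)*σ) / σ^k)))) := by
    intro i
    have hfilter_eq : (ExtP old π new).filter (fun ρ => Scount n m (B i) ρ = l)
        = (ExtP old π new).filter
          (fun ρ => (∑ C ∈ ρ.filter (fun C => B i ⊆ C), (C \ old).card) = l) := rfl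
    rw [hfilter_eq,
      sum_block_removal old π hπ new F3 (B i) (F10 i) l (gibbsW σ (V (n+m)))]
    have hA_eval : ∀ A ∈ new.powersetCard l,
        ∑ ρ'' ∈ ExtP (old \ B i) (π.erase (B i)) (new \ A),
            gibbsW σ (V (n+m)) (insert (B i ∪ A) ρ'')
        = risingFac (1-σ) ((B i).card - 1) *
            (risingFac (((B i).card:ℝ) - σ) l *
              ((∏ C ∈ π.erase (B i), risingFac (1-σ) (C.card-1)) *
                ∑ k ∈ Finset.range (m+1), V (n+m) (j+k) *
                  (gfc (m-l) k σ (-(n:ℝ) + ((B i).card:ℝ) + ((j:ℝ)-1)*σ) / σ^k))) := by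
      intro A hA
      obtain ⟨hAs, hAcard⟩ := Finset.mem_powersetCard.mp hA
      have hdisjBA : Disjoint (B i) A := by
        rw [Finset.disjoint_left]
        intro x hx hx'
        exact (Finset.mem_sdiff.mp (hAs hx')).2 (F10s i hx)
      have hXcard : (B i ∪ A).card = (B i).card + l := by
        rw [Finset.card_union_of_disjoint hdisjBA, hAcard]
      have hdisj2 : Disjoint (new \ A) (old \ B i) :=
        F3.mono Finset.sdiff_subset Finset.sdiff_subset
      have hterm : ∀ ρ'' ∈ ExtP (old \ B i) (π.erase (B i)) (new \ A),
          gibbsW σ (V (n+m)) (insert (B i ∪ A) ρ'')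
          = (risingFac (1-σ) ((B i).card - 1) * risingFac (((B i).card:ℝ) - σ) l) *
            ((fun c => V (n+m) (c+1)) ρ''.card *
              ∏ C ∈ ρ'', risingFac (1-σ) (C.card-1)) := by
        intro ρ'' hρ''
        obtain ⟨hpart'', -⟩ := mem_ExtP.mp hρ''
        obtain ⟨x0, hx0⟩ := Finset.nonempty_of_ne_empty (F10e i)
        have hXnm : (B i ∪ A) ∉ ρ'' := by
          intro h'
          have hx0' : x0 ∈ B i ∪ A := Finset.mem_union_left _ hx0
          have h2 := hpart''.1 _ h' hx0'
          rcases Finset.mem_union.mp h2 with h3 | h3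
          · exact (Finset.mem_sdiff.mp h3).2 hx0
          · have h4 : x0 ∈ new := (Finset.mem_sdiff.mp h3).1
            exact (Finset.mem_sdiff.mp h4).2 (F10s i hx0)
        have hgX : risingFac (1-σ) ((B i ∪ A).card - 1)
            = risingFac (1-σ) ((B i).card - 1) * risingFac (((B i).card:ℝ) - σ) l := by
          rw [hXcard]
          have h2 : (B i).card + l - 1 = ((B i).card - 1) + l := by
            have := hci1 i; omega
          rw [h2, risingFac_add]
          congr 2
          rw [Nat.cast_sub (hci1 i), Nat.cast_one]
          ring
        show V (n+m) (insert (B i ∪ A) ρ'').card *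
            ∏ C ∈ insert (B i ∪ A) ρ'', risingFac (1-σ) (C.card-1) = _
        rw [Finset.card_insert_of_notMem hXnm, Finset.prod_insert hXnm, hgX]
        ring
      rw [Finset.sum_congr rfl hterm, ← Finset.mul_sum,
        master_sum hσ0 (old \ B i) (π.erase (B i)) (partOn_erase_block hπ (F10 i))
          (new \ A) hdisj2 (fun c => V (n+m) (c+1))]
      have c1 : (new \ A).card = m - l := by
        rw [Finset.card_sdiff_of_subset hAs, F2, hAcard]
      have c2 : (π.erase (B i)).card = j - 1 := by
        rw [Finset.card_erase_of_mem (F10 i), F6]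
      have c3 : (old \ B i).card = n - (B i).card := by
        rw [Finset.card_sdiff_of_subset (F10s i), F1]
      rw [c1, c2, c3]
      have hγ : (-(((n - (B i).card : ℕ)):ℝ) + ((j-1 : ℕ):ℝ)*σ)
          = (-(n:ℝ) + ((B i).card:ℝ) + ((j:ℝ)-1)*σ) := by
        rw [Nat.cast_sub (hcin i), Nat.cast_sub hj1]
        push_cast
        ring
      have hsum_eq : ∑ k ∈ Finset.range ((m-l)+1),
            (fun c => V (n+m) (c+1)) ((j-1) + k) *
              (gfc (m-l) k σ (-(((n - (B i).card : ℕ)):ℝ) + ((j-1 : ℕ):ℝ)*σ) / σ^k)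
          = ∑ k ∈ Finset.range (m+1), V (n+m) (j+k) *
              (gfc (m-l) k σ (-(n:ℝ) + ((B i).card:ℝ) + ((j:ℝ)-1)*σ) / σ^k) := by
        rw [hγ]
        have step1 : ∀ k ∈ Finset.range ((m-l)+1),
            (fun c => V (n+m) (c+1)) ((j-1) + k) *
              (gfc (m-l) k σ (-(n:ℝ) + ((B i).card:ℝ) + ((j:ℝ)-1)*σ) / σ^k)
            = V (n+m) (j+k) *
              (gfc (m-l) k σ (-(n:ℝ) + ((B i).card:ℝ) + ((j:ℝ)-1)*σ) / σ^k) := by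
          intro k _
          have : (j-1) + k + 1 = j + k := by omega
          simp only []
          rw [this]
        rw [Finset.sum_congr rfl step1]
        refine Finset.sum_subset (Finset.range_subset_range.mpr (by omega)) ?_
        intro k hk hk'
        rw [Finset.mem_range] at hk hk'
        rw [gfc_eq_zero_of_lt σ _ (m-l) k (by omega), zero_div, mul_zero]
      rw [hsum_eq]
      ring
    rw [Finset.sum_congr rfl hA_eval, Finset.sum_const, Finset.card_powersetCard, F2,
      nsmul_eq_mul]
  -- assemble the numerator
  have hnum : ∑ ρ ∈ extensions n m π, (RlcntB n m j l B ρ : ℝ) * gibbsW σ (V (n+m)) ρ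
      = (∏ C ∈ π, risingFac (1-σ) (C.card - 1)) *
          ∑ i : Fin j, (Nat.choose m l : ℝ) *
            (risingFac (((B i).card:ℝ) - σ) l *
              ∑ k ∈ Finset.range (m+1), V (n+m) (j+k) *
                (gfc (m-l) k σ (-(n:ℝ) + ((B i).card:ℝ) + ((j:ℝ)-1)*σ) / σ^k)) := by
    rw [hExt, hsplit, Finset.sum_congr rfl (fun i _ => hstep2 i), Finset.mul_sum]
    refine Finset.sum_congr rfl fun i _ => ?_
    rw [← Finset.mul_prod_erase π _ (F10 i)]
    ring
  -- combine
  show (∑ ρ ∈ extensions n m π, (RlcntB n m j l B ρ : ℝ) * gibbsW σ (V (n+m)) ρ) /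
      (∑ ρ ∈ extensions n m π, gibbsW σ (V (n+m)) ρ) = _
  rw [hnum, hden, mul_div_mul_left _ _ (ne_of_gt hGpos), Finset.sum_div]
  have hTdiv : ∀ t : ℕ,
      (∑ k ∈ Finset.range (m+1), V (n+m) (j+k) *
          (gfc (m-l) k σ (-(n:ℝ) + (t:ℝ) + ((j:ℝ)-1)*σ) / σ^k)) / V n j
      = ∑ k ∈ Finset.range (m+1), V (n+m) (j+k) / V n j *
          (gfc (m-l) k σ (-(n:ℝ) + (t:ℝ) + ((j:ℝ)-1)*σ) / σ^k) := by
    intro t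
    rw [Finset.sum_div]
    exact Finset.sum_congr rfl fun k _ => by ring
  have hmaps : ∀ i ∈ (Finset.univ : Finset (Fin j)), (B i).card ∈ Finset.Icc 1 n :=
    fun i _ => Finset.mem_Icc.mpr ⟨hci1 i, hcin i⟩
  have hfib := Finset.sum_fiberwise_of_maps_to hmaps
    (fun i => (Nat.choose m l : ℝ) *
      (risingFac (((B i).card:ℝ) - σ) l *
        ∑ k ∈ Finset.range (m+1), V (n+m) (j+k) *
          (gfc (m-l) k σ (-(n:ℝ) + ((B i).card:ℝ) + ((j:ℝ)-1)*σ) / σ^k)) / V n j)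
  rw [← hfib, Finset.mul_sum]
  refine Finset.sum_congr rfl fun t ht => ?_
  have hinner : ∀ i ∈ Finset.univ.filter (fun ℓ : Fin j => (B ℓ).card = t),
      (Nat.choose m l : ℝ) *
        (risingFac (((B i).card:ℝ) - σ) l *
          ∑ k ∈ Finset.range (m+1), V (n+m) (j+k) *
            (gfc (m-l) k σ (-(n:ℝ) + ((B i).card:ℝ) + ((j:ℝ)-1)*σ) / σ^k)) / V n j
      = (Nat.choose m l : ℝ) *
        (risingFac ((t:ℝ) - σ) l *
          ∑ k ∈ Finset.range (m+1), V (n+m) (j+k) *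
            (gfc (m-l) k σ (-(n:ℝ) + (t:ℝ) + ((j:ℝ)-1)*σ) / σ^k)) / V n j := by
    intro i hi
    rw [(Finset.mem_filter.mp hi).2]
  rw [Finset.sum_congr rfl hinner, Finset.sum_const, nsmul_eq_mul]
  rw [← hTdiv t]
  ring
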